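/- (Eckart–Young) Let A ∈ ℝ^{m×n} with m ≥ n have singular value decomposition A = U Σ Vᵀ with U, V orthogonal and Σ diagonal with diagonal entries σ₁ ≥ ⋯ ≥ σ_n ≥ 0, and let k < rank(A). Then for every matrix B ∈ ℝ^{m×n} with rank(B) = k, ‖A − B‖₂ ≥ σ_{k+1}; consequently the truncated SVD A_k = U Σ_k Vᵀ attains the minimum of ‖A − B‖₂ over all rank-k matrices B. -/

import Mathlib

open Matrix

/-- The Euclidean (2-)norm on `ℝ^m`. -/
noncomputable def enorm {m : ℕ} (v : Fin m → ℝ) : ℝ := Real.sqrt (∑ i, (v i) ^ 2)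

/-- The spectral norm `‖A‖₂ = max_{‖x‖₂ = 1} ‖Ax‖₂` of a real matrix. -/
noncomputable def matSpectralNorm {m n : ℕ} (A : Matrix (Fin m) (Fin n) ℝ) : ℝ :=
  sSup {r : ℝ | ∃ x : Fin n → ℝ, _root_.enorm x = 1 ∧ r = _root_.enorm (A.mulVec x)}

/-- `IsRSVD A U S V` says that `A = U Σ Vᵀ` is a singular value decomposition of the real
matrix `A`: `U`, `V` are orthogonal and `S` is diagonal with nonincreasing nonnegative
diagonal entries. -/
def IsRSVD {m n : ℕ} (A : Matrix (Fin m) (Fin n) ℝ) (U : Matrix (Fin m) (Fin m) ℝ)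
    (S : Matrix (Fin m) (Fin n) ℝ) (V : Matrix (Fin n) (Fin n) ℝ) : Prop :=
  Uᵀ * U = 1 ∧ Vᵀ * V = 1 ∧
  (∀ (i : Fin m) (j : Fin n), (i : ℕ) ≠ (j : ℕ) → S i j = 0) ∧
  (∀ (i : Fin m) (j : Fin n), 0 ≤ S i j) ∧
  (∀ (i i' : Fin m) (j j' : Fin n), (i : ℕ) = (j : ℕ) → (i' : ℕ) = (j' : ℕ) →
    (i : ℕ) ≤ (i' : ℕ) → S i' j' ≤ S i j) ∧
  A = U * S * Vᵀ

lemma sum_sq_eq_dot {q : ℕ} (v : Fin q → ℝ) : ∑ j, v j ^ 2 = v ⬝ᵥ v := by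
  simp [dotProduct, sq]

lemma sq_enorm {q : ℕ} (v : Fin q → ℝ) : _root_.enorm v ^ 2 = ∑ j, v j ^ 2 := by
  rw [_root_.enorm, Real.sq_sqrt]; positivity

lemma enorm_nonneg' {q : ℕ} (v : Fin q → ℝ) : 0 ≤ _root_.enorm v := Real.sqrt_nonneg _

lemma sum_sq_mulVec_orth {p q : ℕ} (Q : Matrix (Fin p) (Fin q) ℝ) (h : Qᵀ * Q = 1)
    (x : Fin q → ℝ) : ∑ i, (Q.mulVec x i) ^ 2 = ∑ j, (x j) ^ 2 := by
  rw [sum_sq_eq_dot, sum_sq_eq_dot]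
  calc Q.mulVec x ⬝ᵥ Q.mulVec x = (vecMul x Qᵀ) ⬝ᵥ (Q.mulVec x) := by rw [vecMul_transpose]
    _ = x ⬝ᵥ (Qᵀ.mulVec (Q.mulVec x)) := (dotProduct_mulVec _ _ _).symm
    _ = x ⬝ᵥ ((Qᵀ * Q).mulVec x) := by rw [mulVec_mulVec]
    _ = x ⬝ᵥ x := by rw [h, one_mulVec]

lemma enorm_mulVec_orth {p q : ℕ} (Q : Matrix (Fin p) (Fin q) ℝ) (h : Qᵀ * Q = 1)
    (x : Fin q → ℝ) : _root_.enorm (Q.mulVec x) = _root_.enorm x := by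
  rw [_root_.enorm, _root_.enorm, sum_sq_mulVec_orth Q h]

lemma enorm_smul' {q : ℕ} (t : ℝ) (v : Fin q → ℝ) : _root_.enorm (t • v) = |t| * _root_.enorm v := by
  rw [_root_.enorm, _root_.enorm]
  have : ∑ j, ((t • v) j) ^ 2 = t ^ 2 * ∑ j, v j ^ 2 := by
    rw [Finset.mul_sum]; refine Finset.sum_congr rfl fun j _ => ?_
    simp [mul_pow]
  rw [this, Real.sqrt_mul (sq_nonneg t), Real.sqrt_sq_eq_abs]

lemma enorm_pos_of_ne_zero {q : ℕ} {v : Fin q → ℝ} (h : v ≠ 0) : 0 < _root_.enorm v := by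
  obtain ⟨j, hj⟩ := Function.ne_iff.mp h
  refine Real.sqrt_pos.mpr (Finset.sum_pos' (fun i _ => sq_nonneg _) ⟨j, Finset.mem_univ j, ?_⟩)
  exact lt_of_le_of_ne (sq_nonneg _) (Ne.symm (pow_ne_zero 2 hj))

lemma sum_sq_mulVec_diag {p q : ℕ} (hqp : q ≤ p) (M : Matrix (Fin p) (Fin q) ℝ)
    (hM : ∀ (i : Fin p) (j : Fin q), (i:ℕ) ≠ (j:ℕ) → M i j = 0) (y : Fin q → ℝ) :
    ∑ i, (M.mulVec y i) ^ 2 = ∑ j : Fin q, (M (Fin.castLE hqp j) j * y j) ^ 2 := by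
  have hval : ∀ i : Fin p, M.mulVec y i
      = if h : (i:ℕ) < q then M i ⟨i, h⟩ * y ⟨i, h⟩ else 0 := by
    intro i
    simp only [mulVec, dotProduct]
    split_ifs with h
    · refine Finset.sum_eq_single (⟨i.1, h⟩ : Fin q) (fun j _ hj => ?_) (by simp)
      rw [hM i j (fun e => hj (Fin.ext e.symm)), zero_mul]
    · refine Finset.sum_eq_zero fun j _ => ?_
      rw [hM i j (by have := j.isLt; omega), zero_mul]
  set G : ℕ → ℝ := fun i => if h : i < q then
      (M ⟨i, lt_of_lt_of_le h hqp⟩ ⟨i, h⟩ * y ⟨i, h⟩) ^ 2 else 0 with hG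
  calc ∑ i, (M.mulVec y i) ^ 2 = ∑ i : Fin p, G i.1 := by
        refine Finset.sum_congr rfl fun i _ => ?_
        rw [hval i, hG]
        by_cases h : (i:ℕ) < q <;> simp [h]
    _ = ∑ i ∈ Finset.range p, G i := Fin.sum_univ_eq_sum_range G p
    _ = ∑ i ∈ Finset.range q, G i := by
        refine (Finset.sum_subset (Finset.range_subset_range.mpr hqp) fun i _ hi => ?_).symm
        rw [Finset.mem_range, not_lt] at hi
        simp [hG, dif_neg (not_lt.mpr hi)]
    _ = ∑ j : Fin q, G j.1 := (Fin.sum_univ_eq_sum_range G q).symm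
    _ = ∑ j : Fin q, (M (Fin.castLE hqp j) j * y j) ^ 2 := by
        refine Finset.sum_congr rfl fun j _ => ?_
        simp only [hG, dif_pos j.isLt]
        congr

lemma spectral_bddAbove {p q : ℕ} (M : Matrix (Fin p) (Fin q) ℝ) :
    BddAbove {r : ℝ | ∃ x : Fin q → ℝ, _root_.enorm x = 1 ∧ r = _root_.enorm (M.mulVec x)} := by
  refine ⟨Real.sqrt (∑ i, ∑ j, M i j ^ 2), ?_⟩
  rintro r ⟨x, hx, rfl⟩
  have hx2 : ∑ j, x j ^ 2 = 1 := by
    have := sq_enorm x; rw [hx, one_pow] at this; exact this.symm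
  rw [_root_.enorm]
  apply Real.sqrt_le_sqrt
  apply Finset.sum_le_sum
  intro i _
  calc (M.mulVec x i) ^ 2 = (∑ j, M i j * x j) ^ 2 := rfl
    _ ≤ (∑ j, M i j ^ 2) * ∑ j, x j ^ 2 := Finset.sum_mul_sq_le_sq_mul_sq _ _ _
    _ = ∑ j, M i j ^ 2 := by rw [hx2, mul_one]

/-- (Eckart–Young) For `A ∈ ℝ^{m×n}` (`m ≥ n`) with SVD `A = U Σ Vᵀ` and `k < rank(A)`:
every rank-`k` matrix `B` satisfies `‖A − B‖₂ ≥ σ_{k+1}`, and the truncated SVD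
`A_k = U Σ_k Vᵀ` attains the minimum of `‖A − B‖₂` over all rank-`k` matrices `B`. -/
theorem eckart_young {m n k : ℕ} (hnm : n ≤ m)
    (A : Matrix (Fin m) (Fin n) ℝ) (U : Matrix (Fin m) (Fin m) ℝ)
    (S : Matrix (Fin m) (Fin n) ℝ) (V : Matrix (Fin n) (Fin n) ℝ)
    (hsvd : IsRSVD A U S V) (hk : k < A.rank) (hkn : k < n)
    (Sk : Matrix (Fin m) (Fin n) ℝ)
    (hSk : Sk = Matrix.of fun (i : Fin m) (j : Fin n) =>
      if (i : ℕ) < k ∧ (j : ℕ) < k then S i j else 0) :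
    (∀ B : Matrix (Fin m) (Fin n) ℝ, B.rank = k →
      S (Fin.castLE hnm ⟨k, hkn⟩) ⟨k, hkn⟩ ≤ matSpectralNorm (A - B)) ∧
    (∀ B : Matrix (Fin m) (Fin n) ℝ, B.rank = k →
      matSpectralNorm (A - U * Sk * Vᵀ) ≤ matSpectralNorm (A - B)) := by
  obtain ⟨hU, hV, hdiag, hpos, hmono, hA⟩ := hsvd
  set σ := S (Fin.castLE hnm ⟨k, hkn⟩) ⟨k, hkn⟩ with hσ
  have hσ0 : 0 ≤ σ := hpos _ _
  have hkn1 : k + 1 ≤ n := hkn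
  -- Part 1 : lower bound
  have part1 : ∀ B : Matrix (Fin m) (Fin n) ℝ, B.rank = k → σ ≤ matSpectralNorm (A - B) := by
    intro B hB
    set E : Matrix (Fin n) (Fin (k+1)) ℝ :=
      Matrix.of (fun j a => if (j:ℕ) = (a:ℕ) then (1:ℝ) else 0) with hE
    set C := B * (V * E) with hC
    have hCr : C.rank ≤ k := hB ▸ Matrix.rank_mul_le_left B (V * E)
    have hker : LinearMap.ker C.mulVecLin ≠ ⊥ := by
      intro hbot
      have h1 := LinearMap.finrank_range_add_finrank_ker C.mulVecLin
      rw [hbot, finrank_bot, add_zero] at h1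
      have h2 : Module.finrank ℝ (Fin (k+1) → ℝ) = k + 1 := Module.finrank_fin_fun ℝ
      rw [h2] at h1
      have : C.rank = k + 1 := h1
      omega
    obtain ⟨c, hcmem, hc0⟩ := (Submodule.ne_bot_iff _).mp hker
    have hc : C.mulVec c = 0 := hcmem
    set ct : Fin n → ℝ := E.mulVec c with hct
    have hctsupp : ∀ j : Fin n, k + 1 ≤ (j:ℕ) → ct j = 0 := by
      intro j hj
      show ∑ a, E j a * c a = 0
      refine Finset.sum_eq_zero fun a _ => ?_
      have := a.isLt
      simp only [hE, Matrix.of_apply]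
      rw [if_neg (by omega), zero_mul]
    have hctval : ∀ a : Fin (k+1), ct (Fin.castLE hkn1 a) = c a := by
      intro a
      rw [hct]
      show ∑ a', E (Fin.castLE hkn1 a) a' * c a' = c a
      have hs : ∑ a', E (Fin.castLE hkn1 a) a' * c a' = E (Fin.castLE hkn1 a) a * c a :=
        Finset.sum_eq_single a (fun a' _ ha' => by
          simp only [hE, Matrix.of_apply, Fin.coe_castLE]
          rw [if_neg (fun e => ha' (Fin.ext e.symm)), zero_mul])
          (fun h => absurd (Finset.mem_univ a) h)
      rw [hs]
      simp [hE]
    have hctne : ct ≠ 0 := by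
      intro h
      apply hc0
      funext a
      have := hctval a
      rw [h] at this
      simpa using this.symm
    have hctpos : 0 < _root_.enorm ct := enorm_pos_of_ne_zero hctne
    set t := (_root_.enorm ct)⁻¹ with htdef
    set w : Fin n → ℝ := t • ct with hw
    set x : Fin n → ℝ := V.mulVec w with hx
    have hwnorm : _root_.enorm w = 1 := by
      rw [hw, enorm_smul', htdef, abs_of_pos (inv_pos.mpr hctpos),
        inv_mul_cancel₀ (ne_of_gt hctpos)]
    have hxnorm : _root_.enorm x = 1 := by rw [hx, enorm_mulVec_orth V hV, hwnorm]
    have hwsum : ∑ j, w j ^ 2 = 1 := by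
      have := sq_enorm w; rw [hwnorm, one_pow] at this; exact this.symm
    have hBx : B.mulVec x = 0 := by
      rw [hx, hw, mulVec_smul, mulVec_smul]
      have h0 : B.mulVec (V.mulVec ct) = 0 := by
        have : B *ᵥ (V *ᵥ ct) = C *ᵥ c := by
          rw [hct, hC, mulVec_mulVec, mulVec_mulVec, Matrix.mul_assoc]
        rw [this, hc]
      rw [h0, smul_zero]
    have hwsupp : ∀ j : Fin n, k + 1 ≤ (j:ℕ) → w j = 0 := by
      intro j hj; rw [hw]; simp [hctsupp j hj]
    have hVtx : Vᵀ.mulVec x = w := by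
      rw [hx, mulVec_mulVec, hV, one_mulVec]
    have hAx : (A - B).mulVec x = U.mulVec (S.mulVec w) := by
      rw [sub_mulVec, hBx, sub_zero, hA, ← mulVec_mulVec, hVtx, ← mulVec_mulVec]
    have hlow : σ ≤ _root_.enorm ((A - B).mulVec x) := by
      rw [hAx, enorm_mulVec_orth U hU, _root_.enorm]
      rw [sum_sq_mulVec_diag hnm S hdiag w]
      have hterm : ∀ j : Fin n, σ ^ 2 * w j ^ 2 ≤ (S (Fin.castLE hnm j) j * w j) ^ 2 := by
        intro j
        by_cases hj : (j:ℕ) ≤ k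
        · have hle : σ ≤ S (Fin.castLE hnm j) j :=
            hmono (Fin.castLE hnm j) (Fin.castLE hnm ⟨k, hkn⟩) j ⟨k, hkn⟩ rfl rfl hj
          rw [mul_pow]
          exact mul_le_mul_of_nonneg_right (pow_le_pow_left₀ hσ0 hle 2) (sq_nonneg _)
        · rw [hwsupp j (by omega)]
          simp
      have hsum : σ ^ 2 ≤ ∑ j, (S (Fin.castLE hnm j) j * w j) ^ 2 := by
        calc σ ^ 2 = σ ^ 2 * ∑ j, w j ^ 2 := by rw [hwsum, mul_one]
          _ = ∑ j, σ ^ 2 * w j ^ 2 := Finset.mul_sum _ _ _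
          _ ≤ _ := Finset.sum_le_sum fun j _ => hterm j
      calc σ = Real.sqrt (σ ^ 2) := (Real.sqrt_sq hσ0).symm
        _ ≤ _ := Real.sqrt_le_sqrt hsum
    exact hlow.trans (le_csSup (spectral_bddAbove _) ⟨x, hxnorm, rfl⟩)
  -- Part 2 : truncated SVD achieves σ
  have hVVt : (Vᵀ)ᵀ * Vᵀ = 1 := by
    rw [transpose_transpose, mul_eq_one_comm]; exact hV
  have hAk : A - U * Sk * Vᵀ = U * (S - Sk) * Vᵀ := by
    rw [hA, Matrix.mul_sub, Matrix.sub_mul]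
  have hDdiag : ∀ (i : Fin m) (j : Fin n), (i:ℕ) ≠ (j:ℕ) → (S - Sk) i j = 0 := by
    intro i j hij
    rw [Matrix.sub_apply, hdiag i j hij, hSk]
    simp only [Matrix.of_apply, zero_sub, neg_eq_zero]
    split_ifs with h
    · exact hdiag i j hij
    · rfl
  have hDle : ∀ j : Fin n, ((S - Sk) (Fin.castLE hnm j) j) ^ 2 ≤ σ ^ 2 := by
    intro j
    rw [Matrix.sub_apply, hSk]
    simp only [Matrix.of_apply, Fin.coe_castLE]
    by_cases hj : (j:ℕ) < k
    · rw [if_pos ⟨hj, hj⟩, sub_self]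
      simpa using sq_nonneg σ
    · rw [if_neg (fun h => hj h.2), sub_zero]
      have h1 : S (Fin.castLE hnm j) j ≤ σ :=
        hmono (Fin.castLE hnm ⟨k, hkn⟩) (Fin.castLE hnm j) ⟨k, hkn⟩ j rfl rfl
          (show k ≤ (j:ℕ) by omega)
      exact pow_le_pow_left₀ (hpos _ _) h1 2
  have part2 : matSpectralNorm (A - U * Sk * Vᵀ) ≤ σ := by
    apply csSup_le
    · have hn0 : 0 < n := by omega
      refine ⟨_, (fun j => if (j:ℕ) = 0 then 1 else 0 : Fin n → ℝ), ?_, rfl⟩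
      have h1 : ∑ j : Fin n, (if (j:ℕ) = 0 then (1:ℝ) else 0) ^ 2 = 1 := by
        rw [Finset.sum_eq_single (⟨0, hn0⟩ : Fin n) (fun b _ hb => by
          rw [if_neg (fun e => hb (Fin.ext e))]; norm_num)
          (fun h => absurd (Finset.mem_univ _) h)]
        simp
      show Real.sqrt (∑ j : Fin n, (if (j:ℕ) = 0 then (1:ℝ) else 0) ^ 2) = 1
      rw [h1, Real.sqrt_one]
    · rintro r ⟨x, hx, rfl⟩
      set y := Vᵀ.mulVec x with hy
      have hynorm : ∑ j, y j ^ 2 = 1 := by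
        have h1 : _root_.enorm y = 1 := by rw [hy, enorm_mulVec_orth Vᵀ hVVt, hx]
        have := sq_enorm y; rw [h1, one_pow] at this; exact this.symm
      rw [hAk, ← mulVec_mulVec, ← hy, ← mulVec_mulVec, enorm_mulVec_orth U hU, _root_.enorm]
      rw [sum_sq_mulVec_diag hnm (S - Sk) hDdiag y]
      have hsum : ∑ j, ((S - Sk) (Fin.castLE hnm j) j * y j) ^ 2 ≤ σ ^ 2 := by
        calc ∑ j, ((S - Sk) (Fin.castLE hnm j) j * y j) ^ 2
            ≤ ∑ j, σ ^ 2 * y j ^ 2 := by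
              refine Finset.sum_le_sum fun j _ => ?_
              rw [mul_pow]
              exact mul_le_mul_of_nonneg_right (hDle j) (sq_nonneg _)
          _ = σ ^ 2 := by rw [← Finset.mul_sum, hynorm, mul_one]
      calc Real.sqrt (∑ j, ((S - Sk) (Fin.castLE hnm j) j * y j) ^ 2)
          ≤ Real.sqrt (σ ^ 2) := Real.sqrt_le_sqrt hsum
        _ = σ := Real.sqrt_sq hσ0
  exact ⟨part1, fun B hB => part2.trans (part1 B hB)⟩
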